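/- For every integer k ≥ 1, the number of tuples (i_1,…,i_{2k}) ∈ {1,…,n}^{2k} such that E[∏_{j=1}^{2k} R(i_j, i_{j+1})] ≠ 0 (where i_{2k+1} := i_1) is at most (2k)^{2k−2}·n^{k+1}. -/
import Mathlib


def sgn (b : Bool) : ℝ := if b then 1 else -1

noncomputable def Pr {n : ℕ} (P : (Sym2 (Fin n) → Bool) → Prop) : ℝ := by
  classical
  exact ((Finset.univ.filter P).card : ℝ) / (Fintype.card (Sym2 (Fin n) → Bool))

noncomputable def Ex {n : ℕ} (f : (Sym2 (Fin n) → Bool) → ℝ) : ℝ :=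
  (∑ g : Sym2 (Fin n) → Bool, f g) / (Fintype.card (Sym2 (Fin n) → Bool))

noncomputable def Rmat {n : ℕ} (g : Sym2 (Fin n) → Bool) : Matrix (Fin n) (Fin n) ℝ :=
  Matrix.of fun i j => if i = j then 0 else sgn (g s(i, j))

def cyc {m : ℕ} (j : Fin m) : Fin m := ⟨((j : ℕ) + 1) % m, Nat.mod_lt _ j.pos⟩

namespace Stmt5Aux
open Finset

variable {n m : ℕ}

/-- first occurrence index of the value `i j`. -/
noncomputable def fo (i : Fin m → Fin n) (j : Fin m) : Fin m :=
  (Finset.univ.filter (fun t => i t = i j)).min' ⟨j, by simp⟩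

lemma apply_fo (i : Fin m → Fin n) (j : Fin m) : i (fo i j) = i j := by
  have := Finset.min'_mem (Finset.univ.filter (fun t => i t = i j)) ⟨j, by simp⟩
  simpa [fo] using this

lemma fo_le (i : Fin m → Fin n) {j t : Fin m} (h : i t = i j) : fo i j ≤ t :=
  Finset.min'_le _ _ (by simp [h])

lemma fo_congr (i : Fin m → Fin n) {j j' : Fin m} (h : i j = i j') : fo i j = fo i j' := by
  unfold fo
  congr 1
  ext t
  simp [h]

lemma fo_mem_image (i : Fin m → Fin n) (j : Fin m) : fo i j ∈ Finset.univ.image (fo i) :=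
  Finset.mem_image.2 ⟨j, Finset.mem_univ _, rfl⟩

/-- canonical label of position j -/
noncomputable def lab (i : Fin m → Fin n) (j : Fin m) : ℕ :=
  (((Finset.univ.image (fo i))).filter (fun t => t < fo i j)).card

lemma lab_lt_of_fo_lt (i : Fin m → Fin n) {j j' : Fin m} (h : fo i j < fo i j') :
    lab i j < lab i j' := by
  apply Finset.card_lt_card
  constructor
  · intro t ht
    simp only [Finset.mem_filter] at ht ⊢
    exact ⟨ht.1, lt_trans ht.2 h⟩
  · intro hsub
    have := hsub (Finset.mem_filter.2 ⟨fo_mem_image i j, h⟩)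
    simp at this

lemma apply_eq_of_lab_eq (i : Fin m → Fin n) {j j' : Fin m} (h : lab i j = lab i j') :
    i j = i j' := by
  rcases lt_trichotomy (fo i j) (fo i j') with hlt | heq | hlt
  · exact absurd h (Nat.ne_of_lt (lab_lt_of_fo_lt i hlt))
  · rw [← apply_fo i j, ← apply_fo i j', heq]
  · exact absurd h.symm (Nat.ne_of_lt (lab_lt_of_fo_lt i hlt))

lemma lab_lt_card (i : Fin m → Fin n) (j : Fin m) :
    lab i j < (Finset.univ.image (fo i)).card := by
  apply Finset.card_lt_card
  constructor
  · exact Finset.filter_subset _ _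
  · intro hsub
    have := Finset.mem_filter.1 (hsub (fo_mem_image i j))
    simp at this

lemma card_image_fo (i : Fin m → Fin n) :
    (Finset.univ.image (fo i)).card = (Finset.univ.image i).card := by
  have hinj : Set.InjOn i (Finset.univ.image (fo i)) := by
    intro a ha b hb hab
    simp only [Finset.coe_image, Set.mem_image] at ha hb
    obtain ⟨s, _, rfl⟩ := ha
    obtain ⟨s', _, rfl⟩ := hb
    rw [apply_fo i s, apply_fo i s'] at hab
    exact fo_congr i hab
  calc (Finset.univ.image (fo i)).card = ((Finset.univ.image (fo i)).image i).card :=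
        (Finset.card_image_of_injOn hinj).symm
    _ = (Finset.univ.image i).card := by
        rw [Finset.image_image]
        congr 1
        ext v
        simp only [Finset.mem_image, Function.comp]
        constructor
        · rintro ⟨t, ht, rfl⟩; exact ⟨fo i t, Finset.mem_univ _, rfl⟩
        · rintro ⟨t, ht, rfl⟩; exact ⟨t, Finset.mem_univ _, apply_fo i t⟩

lemma lab_zero (i : Fin m → Fin n) (h0 : 0 < m) : lab i ⟨0, h0⟩ = 0 := by
  have hfo : fo i ⟨0, h0⟩ = ⟨0, h0⟩ := by
    have := fo_le i (t := ⟨0, h0⟩) (j := ⟨0, h0⟩) rfl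
    exact le_antisymm this (Fin.mk_le_mk.mpr (Nat.zero_le _))
  rw [lab, hfo]
  convert Finset.card_empty
  ext t
  simp only [Finset.mem_filter, Finset.notMem_empty, iff_false, not_and]
  intro _
  exact not_lt_of_ge (Fin.mk_le_mk.mpr (Nat.zero_le _) : (⟨0, h0⟩ : Fin m) ≤ t)

lemma lab_one (i : Fin m → Fin n) (h2 : 1 < m)
    (hne : i ⟨1, h2⟩ ≠ i ⟨0, lt_trans Nat.zero_lt_one h2⟩) : lab i ⟨1, h2⟩ = 1 := by
  have h0 : 0 < m := lt_trans Nat.zero_lt_one h2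
  have hfo0 : fo i ⟨0, h0⟩ = ⟨0, h0⟩ := by
    have := fo_le i (t := ⟨0, h0⟩) (j := ⟨0, h0⟩) rfl
    exact le_antisymm this (Fin.mk_le_mk.mpr (Nat.zero_le _))
  have hfo1 : fo i ⟨1, h2⟩ = ⟨1, h2⟩ := by
    have hle := fo_le i (t := ⟨1, h2⟩) (j := ⟨1, h2⟩) rfl
    have : fo i ⟨1, h2⟩ ≠ ⟨0, h0⟩ := by
      intro h
      apply hne
      rw [← apply_fo i ⟨1, h2⟩, h]
    refine le_antisymm hle ?_
    rcases Fin.lt_or_le (fo i ⟨1, h2⟩) ⟨1, h2⟩ with hlt | hge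
    · exfalso; apply this
      have h' : (fo i ⟨1, h2⟩ : ℕ) < 1 := hlt
      apply Fin.ext
      show (fo i ⟨1, h2⟩ : ℕ) = 0
      omega
    · exact hge
  rw [lab, hfo1]
  have : ((Finset.univ.image (fo i))).filter (fun t => t < (⟨1, h2⟩ : Fin m)) = {⟨0, h0⟩} := by
    ext t
    simp only [Finset.mem_filter, Finset.mem_singleton]
    constructor
    · rintro ⟨_, ht⟩
      have h' : (t : ℕ) < 1 := ht
      apply Fin.ext
      show (t : ℕ) = 0
      omega
    · rintro rfl
      refine ⟨by rw [← hfo0]; exact fo_mem_image i _, ?_⟩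
      exact Fin.mk_lt_mk.2 Nat.zero_lt_one
  rw [this, Finset.card_singleton]


lemma Ex_eq_zero_of_loop {m : ℕ} (i : Fin m → Fin n) (j0 : Fin m)
    (h : i j0 = i (cyc j0)) :
    Ex (fun g => ∏ j : Fin m, Rmat g (i j) (i (cyc j))) = 0 := by
  unfold Ex
  rw [Finset.sum_eq_zero, zero_div]
  intro g _
  apply Finset.prod_eq_zero (Finset.mem_univ j0)
  simp [Rmat, h]

lemma update_involutive (e : Sym2 (Fin n)) :
    Function.Involutive (fun g : Sym2 (Fin n) → Bool => Function.update g e (!(g e))) := by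
  intro g
  funext x
  by_cases hx : x = e
  · subst hx; simp [Function.update]
  · simp [Function.update, hx]

lemma Ex_eq_zero_of_odd {m : ℕ} (i : Fin m → Fin n)
    (hloop : ∀ j, i j ≠ i (cyc j)) (j0 : Fin m)
    (hodd : ¬ Even ((Finset.univ.filter
      (fun j => s(i j, i (cyc j)) = s(i j0, i (cyc j0)))).card)) :
    Ex (fun g => ∏ j : Fin m, Rmat g (i j) (i (cyc j))) = 0 := by
  classical
  set e : Sym2 (Fin n) := s(i j0, i (cyc j0)) with he
  set P : (Sym2 (Fin n) → Bool) → ℝ := fun g => ∏ j : Fin m, Rmat g (i j) (i (cyc j)) with hP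
  have hfac : ∀ g : Sym2 (Fin n) → Bool, ∀ j : Fin m,
      Rmat g (i j) (i (cyc j)) = sgn (g s(i j, i (cyc j))) := by
    intro g j
    simp [Rmat, hloop j]
  have key : ∀ g, P (Function.update g e (!(g e))) = - P g := by
    intro g
    have step : ∀ j : Fin m,
        Rmat (Function.update g e (!(g e))) (i j) (i (cyc j)) =
          (if s(i j, i (cyc j)) = e then (-1 : ℝ) else 1) * Rmat g (i j) (i (cyc j)) := by
      intro j
      rw [hfac, hfac]
      by_cases hj : s(i j, i (cyc j)) = e
      · rw [if_pos hj, hj, Function.update_self]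
        cases hge : g e <;> simp [sgn]
      · rw [if_neg hj, Function.update_of_ne hj, one_mul]
    rw [hP]
    simp only [step]
    rw [Finset.prod_mul_distrib]
    have : (∏ j : Fin m, (if s(i j, i (cyc j)) = e then (-1 : ℝ) else 1)) = -1 := by
      rw [Finset.prod_ite, Finset.prod_const, Finset.prod_const, one_pow, mul_one]
      exact Odd.neg_one_pow (Nat.not_even_iff_odd.mp hodd)
    rw [this]
    ring
  have hsum : (∑ g : Sym2 (Fin n) → Bool, P g) = 0 := by
    apply Finset.sum_involution (fun g _ => Function.update g e (!(g e)))
    · intro g _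
      rw [key g]
      ring
    · intro g _ _
      intro hcontra
      have := congrFun hcontra e
      simp at this
    · intro g _
      exact update_involutive e g
    · intro g _
      exact Finset.mem_univ (Function.update g e (!(g e)))
  unfold Ex
  rw [hsum, zero_div]

lemma card_image_le_aux {k : ℕ} (hk : 1 ≤ k) (i : Fin (2*k) → Fin n)
    (heven : ∀ j0 : Fin (2*k),
      Even ((Finset.univ.filter
        (fun j => s(i j, i (cyc j)) = s(i j0, i (cyc j0)))).card)) :
    (Finset.univ.image i).card ≤ k + 1 := by
  classical
  have hm : 0 < 2*k := by omega
  set E := Finset.univ.image (fun j : Fin (2*k) => s(i j, i (cyc j))) with hE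
  have hcardE : E.card ≤ k := by
    have hsum : (Finset.univ : Finset (Fin (2*k))).card
        = ∑ e ∈ E, (Finset.univ.filter (fun j => s(i j, i (cyc j)) = e)).card :=
      Finset.card_eq_sum_card_image _ _
    have h2 : ∀ e ∈ E, 2 ≤ (Finset.univ.filter (fun j => s(i j, i (cyc j)) = e)).card := by
      intro e he
      obtain ⟨j0, _, rfl⟩ := Finset.mem_image.1 he
      have hev := heven j0
      have hpos : 0 < (Finset.univ.filter
          (fun j => s(i j, i (cyc j)) = s(i j0, i (cyc j0)))).card :=
        Finset.card_pos.2 ⟨j0, by simp⟩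
      obtain ⟨r, hr⟩ := hev
      omega
    have hle := Finset.card_nsmul_le_sum E _ 2 h2
    rw [← hsum] at hle
    simp only [smul_eq_mul, Finset.card_univ, Fintype.card_fin] at hle
    omega
  -- first occurrence time of a value
  let T : Fin n → Finset (Fin (2*k)) := fun v => Finset.univ.filter (fun t => i t = v)
  let tv : Fin n → Fin (2*k) := fun v => if h : (T v).Nonempty then (T v).min' h else ⟨0, hm⟩
  have h_itv : ∀ v ∈ Finset.univ.image i, i (tv v) = v := by
    intro v hv
    obtain ⟨t, _, rfl⟩ := Finset.mem_image.1 hv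
    have hne : (T (i t)).Nonempty := ⟨t, by simp [T]⟩
    have := Finset.min'_mem (T (i t)) hne
    simp only [T, Finset.mem_filter] at this
    simp only [tv, dif_pos hne]
    exact this.2
  have h_tv_min : ∀ v, ∀ t : Fin (2*k), i t = v → tv v ≤ t := by
    intro v t ht
    have hne : (T v).Nonempty := ⟨t, by simp [T, ht]⟩
    simp only [tv, dif_pos hne]
    exact Finset.min'_le _ _ (by simp [T, ht])
  let pv : Fin n → Fin (2*k) := fun v =>
    ⟨(tv v : ℕ) - 1, Nat.lt_of_le_of_lt (Nat.sub_le _ _) (tv v).isLt⟩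
  let φ : Fin n → Sym2 (Fin n) := fun v => s(i (pv v), i (tv v))
  set V' := (Finset.univ.image i).erase (i ⟨0, hm⟩) with hV'
  have h_tv_pos : ∀ v ∈ V', 1 ≤ (tv v : ℕ) := by
    intro v hv
    have hv2 := Finset.mem_of_mem_erase hv
    have hvne := Finset.ne_of_mem_erase hv
    by_contra h
    have h0 : tv v = ⟨0, hm⟩ := by
      apply Fin.ext
      show (tv v : ℕ) = 0
      omega
    apply hvne
    rw [← h_itv v hv2, h0]
  have hmaps : ∀ v ∈ V', φ v ∈ E := by
    intro v hv
    have h1 := h_tv_pos v hv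
    have hcyc : cyc (pv v) = tv v := by
      apply Fin.ext
      show ((tv v : ℕ) - 1 + 1) % (2*k) = (tv v : ℕ)
      rw [Nat.sub_add_cancel h1]
      exact Nat.mod_eq_of_lt (tv v).isLt
    apply Finset.mem_image.2
    exact ⟨pv v, Finset.mem_univ _, by rw [hcyc]⟩
  have hinj : Set.InjOn φ V' := by
    intro v hv w hw hvw
    by_contra hne
    have hv2 := Finset.mem_of_mem_erase hv
    have hw2 := Finset.mem_of_mem_erase hw
    have hiv := h_itv v hv2
    have hiw := h_itv w hw2
    simp only [φ, Sym2.eq_iff] at hvw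
    rcases hvw with ⟨h1, h2⟩ | ⟨h1, h2⟩
    · exact hne (by rw [← hiv, ← hiw, h2])
    · -- h1 : i (pv v) = i (tv w), h2 : i (tv v) = i (pv w)
      have hw' : i (pv v) = w := by rw [h1, hiw]
      have hv' : i (pv w) = v := by rw [← h2, hiv]
      have htw : tv w ≤ pv v := h_tv_min w (pv v) hw'
      have htv : tv v ≤ pv w := h_tv_min v (pv w) hv'
      have e1 : (tv w : ℕ) ≤ (tv v : ℕ) - 1 := htw
      have e2 : (tv v : ℕ) ≤ (tv w : ℕ) - 1 := htv
      have p1 := h_tv_pos v hv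
      have p2 := h_tv_pos w hw
      omega
  have hV'card : V'.card ≤ E.card :=
    Finset.card_le_card_of_injOn φ hmaps hinj
  have h0mem : i ⟨0, hm⟩ ∈ Finset.univ.image i := Finset.mem_image.2 ⟨_, Finset.mem_univ _, rfl⟩
  have hcd := Finset.card_erase_add_one h0mem
  rw [← hV'] at hcd
  omega

end Stmt5Aux

namespace Stmt5Aux

noncomputable def enc {n m : ℕ} (hm : 0 < m) (K : ℕ) (i : Fin m → Fin n) :
    (Fin (m - 2) → Fin m) × (Fin (K + 1) → Fin n) :=
  (fun t => ⟨lab i ⟨((t : ℕ) + 2) % m, Nat.mod_lt _ hm⟩ % m, Nat.mod_lt _ hm⟩,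
   fun l => if h : ∃ j, lab i j = (l : ℕ) then i h.choose else i ⟨0, hm⟩)

lemma enc_snd_eq {n m K : ℕ} (hm : 0 < m) (i : Fin m → Fin n) (j : Fin m)
    (hK : lab i j ≤ K) :
    (enc hm K i).2 ⟨lab i j, Nat.lt_succ_of_le hK⟩ = i j := by
  have hex : ∃ j', lab i j' = ((⟨lab i j, Nat.lt_succ_of_le hK⟩ : Fin (K + 1)) : ℕ) := ⟨j, rfl⟩
  show (if h : ∃ j', lab i j' = ((⟨lab i j, Nat.lt_succ_of_le hK⟩ : Fin (K + 1)) : ℕ)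
      then i h.choose else i ⟨0, hm⟩) = i j
  rw [dif_pos hex]
  exact apply_eq_of_lab_eq i hex.choose_spec

lemma enc_fst_eq {n m K : ℕ} (hm : 0 < m) (i : Fin m → Fin n) (t : Fin (m - 2))
    (hlab : ∀ j, lab i j < m) :
    ((enc hm K i).1 t : ℕ) = lab i ⟨((t : ℕ) + 2) % m, Nat.mod_lt _ hm⟩ := by
  show (lab i ⟨((t : ℕ) + 2) % m, Nat.mod_lt _ hm⟩) % m = _
  exact Nat.mod_eq_of_lt (hlab _)

end Stmt5Aux


open Stmt5Aux

open scoped Classical in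
theorem stmt5 (n k : ℕ) (hn : 1 ≤ n) (hk : 1 ≤ k) :
    (Finset.univ.filter fun i : Fin (2 * k) → Fin n =>
        Ex (fun g => ∏ j : Fin (2 * k), Rmat g (i j) (i (cyc j))) ≠ 0).card
      ≤ (2 * k) ^ (2 * k - 2) * n ^ (k + 1) := by
  classical
  have hm : 0 < 2 * k := by omega
  have hm2 : 1 < 2 * k := by omega
  set S := Finset.univ.filter fun i : Fin (2 * k) → Fin n =>
      Ex (fun g => ∏ j : Fin (2 * k), Rmat g (i j) (i (cyc j))) ≠ 0 with hS
  have hloop : ∀ i ∈ S, ∀ j, i j ≠ i (cyc j) := by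
    intro i hi j hj
    exact (Finset.mem_filter.1 hi).2 (Ex_eq_zero_of_loop i j hj)
  have heven : ∀ i ∈ S, ∀ j0 : Fin (2 * k),
      Even ((Finset.univ.filter
        (fun j => s(i j, i (cyc j)) = s(i j0, i (cyc j0)))).card) := by
    intro i hi j0
    by_contra h
    exact (Finset.mem_filter.1 hi).2 (Ex_eq_zero_of_odd i (hloop i hi) j0 h)
  have hlab_le : ∀ i ∈ S, ∀ j, lab i j ≤ k := by
    intro i hi j
    have h1 := lab_lt_card i j
    rw [card_image_fo] at h1
    have h2 := card_image_le_aux hk i (heven i hi)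
    omega
  have hlab_lt : ∀ (i : Fin (2 * k) → Fin n) (j : Fin (2 * k)), lab i j < 2 * k := by
    intro i j
    have h1 := lab_lt_card i j
    have h2 : (Finset.univ.image (fo i)).card ≤ (Finset.univ : Finset (Fin (2 * k))).card :=
      Finset.card_image_le
    simp only [Finset.card_univ, Fintype.card_fin] at h2
    omega
  have hcyc0 : cyc (⟨0, hm⟩ : Fin (2 * k)) = ⟨1, hm2⟩ := by
    apply Fin.ext
    show (0 + 1) % (2 * k) = 1
    exact Nat.mod_eq_of_lt hm2
  have hinj : Set.InjOn (enc (n := n) hm k) S := by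
    intro i hi i' hi' heq
    have heq1 : (enc hm k i).1 = (enc hm k i').1 := congrArg Prod.fst heq
    have heq2 : (enc hm k i).2 = (enc hm k i').2 := congrArg Prod.snd heq
    have hlabeq : ∀ j, lab i j = lab i' j := by
      intro j
      rcases Nat.lt_or_ge (j : ℕ) 2 with hj | hj
      · have hne : i ⟨1, hm2⟩ ≠ i ⟨0, hm⟩ := by
          have h' := hloop i hi ⟨0, hm⟩
          rw [hcyc0] at h'
          exact fun h => h' h.symm
        have hne' : i' ⟨1, hm2⟩ ≠ i' ⟨0, hm⟩ := by
          have h' := hloop i' hi' ⟨0, hm⟩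
          rw [hcyc0] at h'
          exact fun h => h' h.symm
        rcases Nat.lt_or_ge (j : ℕ) 1 with hj1 | hj1
        · have hj0 : j = ⟨0, hm⟩ := Fin.ext (show (j : ℕ) = 0 by omega)
          rw [hj0, lab_zero i hm, lab_zero i' hm]
        · have hj0 : j = ⟨1, hm2⟩ := Fin.ext (show (j : ℕ) = 1 by omega)
          rw [hj0, lab_one i hm2 hne, lab_one i' hm2 hne']
      · have hjlt := j.isLt
        have ht : ((j : ℕ) - 2) < 2 * k - 2 := by omega
        have hmk : ((((⟨(j : ℕ) - 2, ht⟩ : Fin (2 * k - 2)) : ℕ) + 2) % (2 * k)) = (j : ℕ) := by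
          show (((j : ℕ) - 2) + 2) % (2 * k) = (j : ℕ)
          rw [Nat.sub_add_cancel hj]
          exact Nat.mod_eq_of_lt hjlt
        have e1 := enc_fst_eq hm (K := k) i ⟨(j : ℕ) - 2, ht⟩ (hlab_lt i)
        have e2 := enc_fst_eq hm (K := k) i' ⟨(j : ℕ) - 2, ht⟩ (hlab_lt i')
        have hjj : (⟨(((⟨(j : ℕ) - 2, ht⟩ : Fin (2 * k - 2)) : ℕ) + 2) % (2 * k),
            Nat.mod_lt _ hm⟩ : Fin (2 * k)) = j := Fin.ext hmk
        rw [hjj] at e1 e2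
        rw [← e1, ← e2, heq1]
    apply funext
    intro j
    have hK : lab i j ≤ k := hlab_le i hi j
    have hK' : lab i' j ≤ k := hlab_le i' hi' j
    have h1 := enc_snd_eq hm i j hK
    have h2 := enc_snd_eq hm i' j hK'
    have hfin : (⟨lab i j, Nat.lt_succ_of_le hK⟩ : Fin (k + 1))
        = ⟨lab i' j, Nat.lt_succ_of_le hK'⟩ := Fin.ext (hlabeq j)
    rw [← h1, ← h2, ← hfin, heq2]
  have hcard := Finset.card_le_card_of_injOn (enc (n := n) hm k)
    (fun i _ => Finset.mem_univ (enc hm k i)) hinj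
  apply le_trans hcard
  rw [Finset.card_univ]
  rw [Fintype.card_prod, Fintype.card_fun, Fintype.card_fun]
  simp [Fintype.card_fin]
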